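/- There exists a constant C₄ > 0 depending only on L_x and L_y (not on h, m, n) such that for every periodic grid function φ: (i) ‖φ − φ̄‖₄ ≤ C₄·‖∇_hφ‖₂, where φ̄ is the constant grid function equal to the mean value (1/(m·n)) Σ_{i,j} φ(i,j); and (ii) ‖∇_hφ‖₄ ≤ C₄·‖Δ_hφ‖₂. -/

import Mathlib

open Finset

noncomputable section

/-- Periodic grid functions on an `m × n` grid (indices taken modulo `m` and `n`). -/
abbrev Grid (m n : ℕ) := ZMod m × ZMod n → ℝ

/-- Forward difference in the `x` direction. -/
def Dx {m n : ℕ} (h : ℝ) (φ : Grid m n) : Grid m n :=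
  fun p => (φ (p.1 + 1, p.2) - φ p) / h

/-- Forward difference in the `y` direction. -/
def Dy {m n : ℕ} (h : ℝ) (φ : Grid m n) : Grid m n :=
  fun p => (φ (p.1, p.2 + 1) - φ p) / h

/-- The five-point discrete Laplacian. -/
def lapH {m n : ℕ} (h : ℝ) (φ : Grid m n) : Grid m n :=
  fun p => (φ (p.1 + 1, p.2) + φ (p.1 - 1, p.2) + φ (p.1, p.2 + 1) + φ (p.1, p.2 - 1)
    - 4 * φ p) / h ^ 2

/-- Discrete `L²` norm. -/
def norm2 {m n : ℕ} [NeZero m] [NeZero n] (h : ℝ) (φ : Grid m n) : ℝ :=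
  Real.sqrt (h ^ 2 * ∑ p : ZMod m × ZMod n, φ p ^ 2)

/-- Discrete `L²` norm of the gradient. -/
def gradNorm2 {m n : ℕ} [NeZero m] [NeZero n] (h : ℝ) (φ : Grid m n) : ℝ :=
  Real.sqrt (h ^ 2 * ∑ p : ZMod m × ZMod n, (Dx h φ p ^ 2 + Dy h φ p ^ 2))

/-- Discrete `L⁴` norm. -/
def norm4 {m n : ℕ} [NeZero m] [NeZero n] (h : ℝ) (φ : Grid m n) : ℝ :=
  (h ^ 2 * ∑ p : ZMod m × ZMod n, φ p ^ 4) ^ ((1 : ℝ) / 4)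

/-- Discrete `L⁴` norm of the gradient. -/
def gradNorm4 {m n : ℕ} [NeZero m] [NeZero n] (h : ℝ) (φ : Grid m n) : ℝ :=
  (h ^ 2 * ∑ p : ZMod m × ZMod n, (Dx h φ p ^ 4 + Dy h φ p ^ 4)) ^ ((1 : ℝ) / 4)

set_option maxHeartbeats 1600000

section Helpers
variable {m n : ℕ} [NeZero m] [NeZero n]

lemma sum_shift2 (a : ZMod m) (b : ZMod n) (F : ZMod m × ZMod n → ℝ) :
    ∑ p : ZMod m × ZMod n, F (p.1 + a, p.2 + b) = ∑ p, F p :=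
  Fintype.sum_equiv ((Equiv.addRight a).prodCongr (Equiv.addRight b)) _ _ (fun _ => rfl)

lemma telescope_abs (f : ZMod m → ℝ) (i k : ZMod m) :
    |f i - f k| ≤ ∑ a : ZMod m, |f (a + 1) - f a| := by
  have key : ∀ r : ℕ, f (k + (r : ZMod m)) - f k
      = ∑ t ∈ Finset.range r, (f (k + (t : ZMod m) + 1) - f (k + (t : ZMod m))) := by
    intro r
    induction r with
    | zero => simp
    | succ r ih =>
        rw [Finset.sum_range_succ, ← ih]
        have : ((r + 1 : ℕ) : ZMod m) = (r : ZMod m) + 1 := by push_cast; ring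
        rw [this, ← add_assoc]
        ring
  set r := (i - k).val with hr
  have hik : k + (r : ZMod m) = i := by
    rw [hr, ZMod.natCast_rightInverse (i - k)]; ring
  have h1 : |f i - f k| ≤ ∑ t ∈ Finset.range r, |f (k + (t:ZMod m) + 1) - f (k + (t:ZMod m))| := by
    rw [← hik, key r]
    exact Finset.abs_sum_le_sum_abs _ _
  refine h1.trans ?_
  have hinj : ∀ t ∈ Finset.range r, ∀ t' ∈ Finset.range r,
      k + (t : ZMod m) = k + (t' : ZMod m) → t = t' := by
    intro t ht t' ht' he
    have hrm := ZMod.val_lt (i - k)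
    have h1 : t < m := lt_of_lt_of_le (Finset.mem_range.mp ht) (le_of_lt hrm)
    have h2 : t' < m := lt_of_lt_of_le (Finset.mem_range.mp ht') (le_of_lt hrm)
    have he' : (t : ZMod m) = (t' : ZMod m) := add_left_cancel he
    calc t = ((t : ZMod m)).val := (ZMod.val_cast_of_lt h1).symm
      _ = ((t' : ZMod m)).val := by rw [he']
      _ = t' := ZMod.val_cast_of_lt h2
  have himg := Finset.sum_image (s := Finset.range r) (g := fun t : ℕ => k + (t : ZMod m))
    (f := fun a : ZMod m => |f (a+1) - f a|) hinj
  rw [show (∑ t ∈ Finset.range r, |f (k + (t:ZMod m) + 1) - f (k + (t:ZMod m))|)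
      = ∑ a ∈ (Finset.range r).image (fun t : ℕ => k + (t : ZMod m)), |f (a+1) - f a| from himg.symm]
  exact Finset.sum_le_sum_of_subset_of_nonneg (Finset.subset_univ _)
    (fun a _ _ => abs_nonneg _)

lemma le_mean_add_var (f : ZMod m → ℝ) (i : ZMod m) :
    f i ≤ (∑ k, f k) / m + ∑ a : ZMod m, |f (a+1) - f a| := by
  have hm : (0:ℝ) < m := by
    have := Nat.pos_of_ne_zero (NeZero.ne m); exact_mod_cast this
  have h2 : ∑ k : ZMod m, (f i - f k) ≤ ∑ _k : ZMod m, ∑ a : ZMod m, |f (a+1)-f a| :=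
    Finset.sum_le_sum (fun k _ => (le_abs_self _).trans (telescope_abs f i k))
  rw [Finset.sum_sub_distrib, Finset.sum_const, Finset.sum_const] at h2
  simp only [Finset.card_univ, ZMod.card, nsmul_eq_mul] at h2
  rw [div_add' _ _ _ (ne_of_gt hm), le_div_iff₀ hm]
  nlinarith [h2]

lemma sum_dx_zero (h : ℝ) (φ : Grid m n) :
    ∑ p : ZMod m × ZMod n, Dx h φ p = 0 := by
  simp only [Dx, div_eq_mul_inv, ← Finset.sum_mul]
  rw [Finset.sum_sub_distrib]
  rw [show (∑ p : ZMod m × ZMod n, φ (p.1+1, p.2)) = ∑ p, φ p from by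
    have := sum_shift2 (m:=m) (n:=n) 1 0 φ
    simpa using this]
  simp

lemma sum_dy_zero (h : ℝ) (φ : Grid m n) :
    ∑ p : ZMod m × ZMod n, Dy h φ p = 0 := by
  simp only [Dy, div_eq_mul_inv, ← Finset.sum_mul]
  rw [Finset.sum_sub_distrib]
  rw [show (∑ p : ZMod m × ZMod n, φ (p.1, p.2+1)) = ∑ p, φ p from by
    have := sum_shift2 (m:=m) (n:=n) 0 1 φ
    simpa using this]
  simp

lemma cs_sqrt (f g : ZMod m × ZMod n → ℝ) :
    ∑ p : ZMod m × ZMod n, f p * g p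
      ≤ Real.sqrt (∑ p, f p ^ 2) * Real.sqrt (∑ p, g p ^ 2) := by
  have h1 := Finset.sum_mul_sq_le_sq_mul_sq univ f g
  have h2 : ∑ p, f p * g p ≤ |∑ p, f p * g p| := le_abs_self _
  refine h2.trans ?_
  rw [← Real.sqrt_sq_eq_abs, ← Real.sqrt_mul (by positivity)]
  exact Real.sqrt_le_sqrt h1

lemma poincare (h : ℝ) (hh : 0 < h) (u : Grid m n)
    (hmean : ∑ p : ZMod m × ZMod n, u p = 0) :
    h^2 * ∑ p : ZMod m × ZMod n, u p ^ 2 ≤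
      2*((m:ℝ)*h)^2 * (h^2 * ∑ p : ZMod m × ZMod n, Dx h u p ^2)
      + 2*((n:ℝ)*h)^2 * (h^2 * ∑ p : ZMod m × ZMod n, Dy h u p ^2) := by
  have hm : (0:ℝ) < m := by exact_mod_cast Nat.pos_of_ne_zero (NeZero.ne m)
  have hn : (0:ℝ) < n := by exact_mod_cast Nat.pos_of_ne_zero (NeZero.ne n)
  set P : ZMod n → ℝ := fun j => ∑ a : ZMod m, |u (a+1, j) - u (a, j)| with hP
  set Q : ZMod m → ℝ := fun k => ∑ b : ZMod n, |u (k, b+1) - u (k, b)| with hQ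
  -- pointwise bound
  have step : ∀ i : ZMod m, ∀ j : ZMod n, |u (i,j)| ≤ P j + (∑ k, Q k)/m := by
    intro i j
    have key : (m:ℝ)*(n:ℝ) * u (i,j) = ∑ q : ZMod m × ZMod n, (u (i,j) - u q) := by
      rw [Finset.sum_sub_distrib, hmean, Finset.sum_const, Finset.card_univ]
      simp [ZMod.card, mul_comm]
    have hb : ∀ q : ZMod m × ZMod n, |u (i,j) - u q| ≤ P j + Q q.1 := by
      rintro ⟨k, l⟩
      calc |u (i,j) - u (k,l)| ≤ |u (i,j) - u (k,j)| + |u (k,j) - u (k,l)| := abs_sub_le _ _ _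
        _ ≤ P j + Q k := by
            gcongr
            · exact telescope_abs (fun a => u (a, j)) i k
            · exact telescope_abs (fun b => u (k, b)) j l
    have h2 : (m:ℝ)*(n:ℝ) * |u (i,j)| ≤ ∑ q : ZMod m × ZMod n, (P j + Q q.1) := by
      calc (m:ℝ)*(n:ℝ) * |u (i,j)| = |∑ q : ZMod m × ZMod n, (u (i,j) - u q)| := by
            rw [← key, abs_mul]
            congr 1
            rw [abs_of_pos (by positivity)]
        _ ≤ ∑ q : ZMod m × ZMod n, |u (i,j) - u q| := Finset.abs_sum_le_sum_abs _ _
        _ ≤ _ := Finset.sum_le_sum (fun q _ => hb q)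
    have h3 : ∑ q : ZMod m × ZMod n, (P j + Q q.1) = (m:ℝ)*(n:ℝ)*(P j) + (n:ℝ) * ∑ k, Q k := by
      rw [Fintype.sum_prod_type]
      simp [Finset.sum_add_distrib, Finset.card_univ, ZMod.card, mul_comm,
        ← Finset.mul_sum]
      ring
    rw [h3] at h2
    rw [← sub_nonneg]
    have expand : P j + (∑ k, Q k)/m - |u (i,j)|
        = ((m:ℝ)*(n:ℝ)*(P j) + (n:ℝ)*∑ k, Q k - (m:ℝ)*(n:ℝ)*|u (i,j)|) / ((m:ℝ)*(n:ℝ)) := by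
      field_simp
    rw [expand]
    exact div_nonneg (by linarith) (by positivity)
  set Gx := ∑ p : ZMod m × ZMod n, Dx h u p ^2 with hGx
  set Gy := ∑ p : ZMod m × ZMod n, Dy h u p ^2 with hGy
  have hGx' : ∑ j : ZMod n, ∑ a : ZMod m, Dx h u (a,j) ^2 = Gx := by
    rw [hGx, Fintype.sum_prod_type]; exact Finset.sum_comm
  have hGy' : ∑ k : ZMod m, ∑ b : ZMod n, Dy h u (k,b) ^2 = Gy := by
    rw [hGy, Fintype.sum_prod_type]
  have hdx : ∀ j, P j ^2 ≤ (m:ℝ) * (h^2 * ∑ a : ZMod m, Dx h u (a,j) ^2) := by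
    intro j
    have cs : (∑ a : ZMod m, |u (a+1,j) - u (a,j)|)^2
        ≤ (Fintype.card (ZMod m) : ℝ) * ∑ a : ZMod m, |u (a+1,j) - u (a,j)|^2 :=
      sq_sum_le_card_mul_sum_sq
    rw [ZMod.card] at cs
    have hterm : ∀ a : ZMod m, |u (a+1,j) - u (a,j)|^2 = h^2 * Dx h u (a,j)^2 := by
      intro a
      rw [sq_abs]
      show (u (a+1,j) - u (a,j))^2 = h^2 * ((u ((a,j).1+1,(a,j).2) - u (a,j))/h)^2
      field_simp
    calc P j ^2 ≤ (m:ℝ) * ∑ a : ZMod m, |u (a+1,j) - u (a,j)|^2 := cs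
      _ = (m:ℝ) * (h^2 * ∑ a : ZMod m, Dx h u (a,j) ^2) := by
          rw [Finset.mul_sum, ← Finset.mul_sum]
          congr 1
          rw [Finset.mul_sum]
          exact Finset.sum_congr rfl (fun a _ => hterm a)
  have hdy : ∀ k, Q k ^2 ≤ (n:ℝ) * (h^2 * ∑ b : ZMod n, Dy h u (k,b) ^2) := by
    intro k
    have cs : (∑ b : ZMod n, |u (k,b+1) - u (k,b)|)^2
        ≤ (Fintype.card (ZMod n) : ℝ) * ∑ b : ZMod n, |u (k,b+1) - u (k,b)|^2 :=
      sq_sum_le_card_mul_sum_sq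
    rw [ZMod.card] at cs
    have hterm : ∀ b : ZMod n, |u (k,b+1) - u (k,b)|^2 = h^2 * Dy h u (k,b)^2 := by
      intro b
      rw [sq_abs]
      show (u (k,b+1) - u (k,b))^2 = h^2 * ((u ((k,b).1,(k,b).2+1) - u (k,b))/h)^2
      field_simp
    calc Q k ^2 ≤ (n:ℝ) * ∑ b : ZMod n, |u (k,b+1) - u (k,b)|^2 := cs
      _ = (n:ℝ) * (h^2 * ∑ b : ZMod n, Dy h u (k,b) ^2) := by
          rw [Finset.mul_sum, ← Finset.mul_sum]
          congr 1
          rw [Finset.mul_sum]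
          exact Finset.sum_congr rfl (fun b _ => hterm b)
  have hup : ∀ p : ZMod m × ZMod n, u p ^2 ≤ 2 * P p.2 ^2 + 2 * ((∑ k, Q k)/m)^2 := by
    rintro ⟨i,j⟩
    have h1 := step i j
    nlinarith [abs_nonneg (u (i,j)), sq_abs (u (i,j)),
      sq_nonneg (P j - (∑ k, Q k)/(m:ℝ)), sq_nonneg (P j + (∑ k, Q k)/(m:ℝ))]
  have hsumP : ∑ j : ZMod n, P j ^2 ≤ (m:ℝ) * (h^2 * Gx) := by
    calc ∑ j : ZMod n, P j ^2 ≤ ∑ j : ZMod n, (m:ℝ) * (h^2 * ∑ a : ZMod m, Dx h u (a,j)^2) :=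
          Finset.sum_le_sum (fun j _ => hdx j)
      _ = (m:ℝ) * (h^2 * Gx) := by
          rw [← Finset.mul_sum, ← Finset.mul_sum, hGx']
  have hsumQ : ∑ k : ZMod m, Q k ^2 ≤ (n:ℝ) * (h^2 * Gy) := by
    calc ∑ k : ZMod m, Q k ^2 ≤ ∑ k : ZMod m, (n:ℝ) * (h^2 * ∑ b : ZMod n, Dy h u (k,b)^2) :=
          Finset.sum_le_sum (fun k _ => hdy k)
      _ = (n:ℝ) * (h^2 * Gy) := by
          rw [← Finset.mul_sum, ← Finset.mul_sum, hGy']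
  have hc2 : ((∑ k, Q k)/(m:ℝ))^2 ≤ (n:ℝ) * (h^2 * Gy) / (m:ℝ) := by
    rw [div_pow, div_le_div_iff₀ (by positivity) hm]
    have cs : (∑ k, Q k)^2 ≤ (Fintype.card (ZMod m) : ℝ) * ∑ k, Q k^2 :=
      sq_sum_le_card_mul_sum_sq
    rw [ZMod.card] at cs
    nlinarith [cs, hsumQ, hm]
  have total : ∑ p : ZMod m × ZMod n, u p ^2
      ≤ 2*(m:ℝ)^2*(h^2*Gx) + 2*(n:ℝ)^2*(h^2*Gy) := by
    have c1 : ∑ p : ZMod m × ZMod n, u p ^2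
        ≤ ∑ p : ZMod m × ZMod n, (2 * P p.2 ^2 + 2 * ((∑ k, Q k)/m)^2) :=
      Finset.sum_le_sum (fun p _ => hup p)
    have c2 : ∑ p : ZMod m × ZMod n, (2 * P p.2 ^2 + 2 * ((∑ k, Q k)/(m:ℝ))^2)
        = 2*(m:ℝ) * ∑ j : ZMod n, P j ^2 + 2*(m:ℝ)*(n:ℝ)*((∑ k, Q k)/(m:ℝ))^2 := by
      rw [Finset.sum_add_distrib, Fintype.sum_prod_type]
      simp only [Finset.sum_const, Finset.card_univ, ZMod.card, Fintype.card_prod,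
        nsmul_eq_mul, Nat.cast_mul, ← Finset.mul_sum]
      ring
    have c3 : 2*(m:ℝ)*(n:ℝ)*((∑ k, Q k)/(m:ℝ))^2 ≤ 2*(n:ℝ)^2*(h^2*Gy) := by
      have := mul_le_mul_of_nonneg_left hc2 (by positivity : (0:ℝ) ≤ 2*(m:ℝ)*(n:ℝ))
      calc 2*(m:ℝ)*(n:ℝ)*((∑ k, Q k)/(m:ℝ))^2 ≤ 2*(m:ℝ)*(n:ℝ)*((n:ℝ) * (h^2 * Gy) / (m:ℝ)) := this
        _ = 2*(n:ℝ)^2*(h^2*Gy) := by field_simp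
    have c4 : 2*(m:ℝ) * ∑ j : ZMod n, P j ^2 ≤ 2*(m:ℝ)^2*(h^2*Gx) := by
      have := mul_le_mul_of_nonneg_left hsumP (by positivity : (0:ℝ) ≤ 2*(m:ℝ))
      calc 2*(m:ℝ) * ∑ j : ZMod n, P j ^2 ≤ 2*(m:ℝ)*((m:ℝ) * (h^2*Gx)) := this
        _ = 2*(m:ℝ)^2*(h^2*Gx) := by ring
    linarith [c1, c2.le, c2.ge, c3, c4]
  have final := mul_le_mul_of_nonneg_left total (sq_nonneg h)
  calc h^2 * ∑ p : ZMod m × ZMod n, u p ^2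
      ≤ h^2 * (2*(m:ℝ)^2*(h^2*Gx) + 2*(n:ℝ)^2*(h^2*Gy)) := final
    _ = 2*((m:ℝ)*h)^2 * (h^2 * Gx) + 2*((n:ℝ)*h)^2 * (h^2 * Gy) := by ring

lemma lady (h : ℝ) (hh : 0 < h) (u : Grid m n) :
    h^2 * ∑ p : ZMod m × ZMod n, u p ^ 4
      ≤ (h^2 * (∑ p : ZMod m × ZMod n, u p ^2) / ((m:ℝ)*h)
          + 2 * Real.sqrt (h^2 * ∑ p : ZMod m × ZMod n, u p ^2)
              * Real.sqrt (h^2 * ∑ p : ZMod m × ZMod n, Dx h u p ^2))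
        * (h^2 * (∑ p : ZMod m × ZMod n, u p ^2) / ((n:ℝ)*h)
          + 2 * Real.sqrt (h^2 * ∑ p : ZMod m × ZMod n, u p ^2)
              * Real.sqrt (h^2 * ∑ p : ZMod m × ZMod n, Dy h u p ^2)) := by
  have hm : (0:ℝ) < m := by exact_mod_cast Nat.pos_of_ne_zero (NeZero.ne m)
  have hn : (0:ℝ) < n := by exact_mod_cast Nat.pos_of_ne_zero (NeZero.ne n)
  set S := ∑ p : ZMod m × ZMod n, u p ^2 with hS
  set Gx := ∑ p : ZMod m × ZMod n, Dx h u p ^2 with hGx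
  set Gy := ∑ p : ZMod m × ZMod n, Dy h u p ^2 with hGy
  have hSnn : 0 ≤ S := Finset.sum_nonneg (fun p _ => sq_nonneg _)
  have hGxnn : 0 ≤ Gx := Finset.sum_nonneg (fun p _ => sq_nonneg _)
  have hGynn : 0 ≤ Gy := Finset.sum_nonneg (fun p _ => sq_nonneg _)
  set X : ZMod n → ℝ := fun j =>
    (∑ k : ZMod m, u (k,j)^2)/m + ∑ a : ZMod m, |u (a+1,j)^2 - u (a,j)^2| with hX
  set Y : ZMod m → ℝ := fun i =>
    (∑ l : ZMod n, u (i,l)^2)/n + ∑ b : ZMod n, |u (i,b+1)^2 - u (i,b)^2| with hY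
  have hXb : ∀ (i : ZMod m) (j : ZMod n), u (i,j)^2 ≤ X j := by
    intro i j
    exact le_mean_add_var (fun a => u (a,j)^2) i
  have hYb : ∀ (i : ZMod m) (j : ZMod n), u (i,j)^2 ≤ Y i := by
    intro i j
    exact le_mean_add_var (fun b => u (i,b)^2) j
  have hXnn : ∀ j, 0 ≤ X j := fun j => le_trans (sq_nonneg (u (0,j))) (hXb 0 j)
  have hYnn : ∀ i, 0 ≤ Y i := fun i => le_trans (sq_nonneg (u (i,0))) (hYb i 0)
  -- sum of fourth powers
  have p4 : ∑ p : ZMod m × ZMod n, u p ^4 ≤ (∑ j : ZMod n, X j) * (∑ i : ZMod m, Y i) := by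
    calc ∑ p : ZMod m × ZMod n, u p ^4 ≤ ∑ p : ZMod m × ZMod n, X p.2 * Y p.1 := by
          refine Finset.sum_le_sum (fun p _ => ?_)
          have : u p ^4 = u p^2 * u p^2 := by ring
          rw [this]
          exact mul_le_mul (hXb p.1 p.2) (hYb p.1 p.2) (sq_nonneg _) (hXnn p.2)
      _ = (∑ j : ZMod n, X j) * (∑ i : ZMod m, Y i) := by
          rw [Fintype.sum_prod_type]
          simp only [← Finset.sum_mul, ← Finset.mul_sum]
  -- bound ∑ X
  have meanX : ∑ j : ZMod n, (∑ k : ZMod m, u (k,j)^2)/(m:ℝ) = S / m := by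
    rw [← Finset.sum_div]
    congr 1
    rw [hS, Fintype.sum_prod_type]
    exact Finset.sum_comm
  have meanY : ∑ i : ZMod m, (∑ l : ZMod n, u (i,l)^2)/(n:ℝ) = S / n := by
    rw [← Finset.sum_div]
    congr 1
    rw [hS, Fintype.sum_prod_type]
  have varX : ∑ j : ZMod n, ∑ a : ZMod m, |u (a+1,j)^2 - u (a,j)^2|
      ≤ 2 * Real.sqrt S * Real.sqrt (h^2 * Gx) := by
    have swapX : ∑ j : ZMod n, ∑ a : ZMod m, |u (a+1,j)^2 - u (a,j)^2|
        = ∑ p : ZMod m × ZMod n, |u (p.1+1,p.2)^2 - u p^2| := by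
      rw [Fintype.sum_prod_type (f := fun p : ZMod m × ZMod n => |u (p.1+1,p.2)^2 - u p^2|)]
      exact Finset.sum_comm
    have e1 : ∑ p : ZMod m × ZMod n, |u (p.1+1,p.2)^2 - u p^2|
        ≤ ∑ p : ZMod m × ZMod n, (|u (p.1+1,p.2)| + |u p|) * |u (p.1+1,p.2) - u p| := by
      refine Finset.sum_le_sum (fun p _ => ?_)
      rw [show u (p.1+1,p.2)^2 - u p^2 = (u (p.1+1,p.2) + u p) * (u (p.1+1,p.2) - u p) from by ring,
        abs_mul]
      gcongr ?_ * _
      exact abs_add_le _ _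
    rw [swapX]
    refine e1.trans ?_
    have e2 := cs_sqrt (fun p : ZMod m × ZMod n => |u (p.1+1,p.2)| + |u p|)
      (fun p => |u (p.1+1,p.2) - u p|)
    refine e2.trans ?_
    have b1 : ∑ p : ZMod m × ZMod n, (|u (p.1+1,p.2)| + |u p|)^2 ≤ 4 * S := by
      have hsh : ∑ p : ZMod m × ZMod n, u (p.1+1,p.2)^2 = S := by
        have := sum_shift2 (m:=m) (n:=n) 1 0 (fun q => u q ^2)
        simpa using this
      have pt : ∀ p : ZMod m × ZMod n, (|u (p.1+1,p.2)| + |u p|)^2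
          ≤ 2 * u (p.1+1,p.2)^2 + 2 * u p^2 := by
        intro p
        nlinarith [sq_abs (u (p.1+1,p.2)), sq_abs (u p), sq_nonneg (|u (p.1+1,p.2)| - |u p|)]
      calc ∑ p : ZMod m × ZMod n, (|u (p.1+1,p.2)| + |u p|)^2
          ≤ ∑ p : ZMod m × ZMod n, (2 * u (p.1+1,p.2)^2 + 2 * u p^2) :=
            Finset.sum_le_sum (fun p _ => pt p)
        _ = 4 * S := by
            rw [Finset.sum_add_distrib, ← Finset.mul_sum, ← Finset.mul_sum, hsh]
            ring
    have b2 : ∑ p : ZMod m × ZMod n, |u (p.1+1,p.2) - u p|^2 = h^2 * Gx := by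
      rw [hGx, Finset.mul_sum]
      refine Finset.sum_congr rfl (fun p _ => ?_)
      rw [sq_abs]
      show (u (p.1+1,p.2) - u p)^2 = h^2 * ((u (p.1+1,p.2) - u p)/h)^2
      field_simp
    rw [b2]
    gcongr
    calc Real.sqrt (∑ p : ZMod m × ZMod n, (|u (p.1+1,p.2)| + |u p|)^2)
        ≤ Real.sqrt (4 * S) := Real.sqrt_le_sqrt b1
      _ = 2 * Real.sqrt S := by
          rw [show (4:ℝ) * S = (2:ℝ)^2 * S from by ring, Real.sqrt_mul (by positivity),
            Real.sqrt_sq (by norm_num)]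
  have varY : ∑ i : ZMod m, ∑ b : ZMod n, |u (i,b+1)^2 - u (i,b)^2|
      ≤ 2 * Real.sqrt S * Real.sqrt (h^2 * Gy) := by
    have swapY : ∑ i : ZMod m, ∑ b : ZMod n, |u (i,b+1)^2 - u (i,b)^2|
        = ∑ p : ZMod m × ZMod n, |u (p.1,p.2+1)^2 - u p^2| := by
      rw [Fintype.sum_prod_type (f := fun p : ZMod m × ZMod n => |u (p.1,p.2+1)^2 - u p^2|)]
    have e1 : ∑ p : ZMod m × ZMod n, |u (p.1,p.2+1)^2 - u p^2|
        ≤ ∑ p : ZMod m × ZMod n, (|u (p.1,p.2+1)| + |u p|) * |u (p.1,p.2+1) - u p| := by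
      refine Finset.sum_le_sum (fun p _ => ?_)
      rw [show u (p.1,p.2+1)^2 - u p^2 = (u (p.1,p.2+1) + u p) * (u (p.1,p.2+1) - u p) from by ring,
        abs_mul]
      gcongr ?_ * _
      exact abs_add_le _ _
    rw [swapY]
    refine e1.trans ?_
    have e2 := cs_sqrt (fun p : ZMod m × ZMod n => |u (p.1,p.2+1)| + |u p|)
      (fun p => |u (p.1,p.2+1) - u p|)
    refine e2.trans ?_
    have b1 : ∑ p : ZMod m × ZMod n, (|u (p.1,p.2+1)| + |u p|)^2 ≤ 4 * S := by
      have hsh : ∑ p : ZMod m × ZMod n, u (p.1,p.2+1)^2 = S := by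
        have := sum_shift2 (m:=m) (n:=n) 0 1 (fun q => u q ^2)
        simpa using this
      have pt : ∀ p : ZMod m × ZMod n, (|u (p.1,p.2+1)| + |u p|)^2
          ≤ 2 * u (p.1,p.2+1)^2 + 2 * u p^2 := by
        intro p
        nlinarith [sq_abs (u (p.1,p.2+1)), sq_abs (u p), sq_nonneg (|u (p.1,p.2+1)| - |u p|)]
      calc ∑ p : ZMod m × ZMod n, (|u (p.1,p.2+1)| + |u p|)^2
          ≤ ∑ p : ZMod m × ZMod n, (2 * u (p.1,p.2+1)^2 + 2 * u p^2) :=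
            Finset.sum_le_sum (fun p _ => pt p)
        _ = 4 * S := by
            rw [Finset.sum_add_distrib, ← Finset.mul_sum, ← Finset.mul_sum, hsh]
            ring
    have b2 : ∑ p : ZMod m × ZMod n, |u (p.1,p.2+1) - u p|^2 = h^2 * Gy := by
      rw [hGy, Finset.mul_sum]
      refine Finset.sum_congr rfl (fun p _ => ?_)
      rw [sq_abs]
      show (u (p.1,p.2+1) - u p)^2 = h^2 * ((u (p.1,p.2+1) - u p)/h)^2
      field_simp
    rw [b2]
    gcongr
    calc Real.sqrt (∑ p : ZMod m × ZMod n, (|u (p.1,p.2+1)| + |u p|)^2)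
        ≤ Real.sqrt (4 * S) := Real.sqrt_le_sqrt b1
      _ = 2 * Real.sqrt S := by
          rw [show (4:ℝ) * S = (2:ℝ)^2 * S from by ring, Real.sqrt_mul (by positivity),
            Real.sqrt_sq (by norm_num)]
  -- assemble
  have hXsum : ∑ j : ZMod n, X j ≤ S/m + 2 * Real.sqrt S * Real.sqrt (h^2 * Gx) := by
    rw [hX, Finset.sum_add_distrib, meanX]
    exact add_le_add (le_refl _) varX
  have hYsum : ∑ i : ZMod m, Y i ≤ S/n + 2 * Real.sqrt S * Real.sqrt (h^2 * Gy) := by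
    rw [hY, Finset.sum_add_distrib, meanY]
    exact add_le_add (le_refl _) varY
  have hXsnn : 0 ≤ ∑ j : ZMod n, X j := Finset.sum_nonneg (fun j _ => hXnn j)
  have hYsnn : 0 ≤ ∑ i : ZMod m, Y i := Finset.sum_nonneg (fun i _ => hYnn i)
  have key : h^2 * ∑ p : ZMod m × ZMod n, u p ^4
      ≤ (h * ∑ j : ZMod n, X j) * (h * ∑ i : ZMod m, Y i) := by
    have := mul_le_mul_of_nonneg_left p4 (sq_nonneg h)
    calc h^2 * ∑ p : ZMod m × ZMod n, u p ^4
        ≤ h^2 * ((∑ j : ZMod n, X j) * (∑ i : ZMod m, Y i)) := this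
      _ = (h * ∑ j : ZMod n, X j) * (h * ∑ i : ZMod m, Y i) := by ring
  refine key.trans ?_
  have hsqrtS : h * Real.sqrt S = Real.sqrt (h^2 * S) := by
    rw [Real.sqrt_mul (sq_nonneg h), Real.sqrt_sq hh.le]
  have f1 : h * ∑ j : ZMod n, X j ≤ h^2 * S / ((m:ℝ)*h)
      + 2 * Real.sqrt (h^2*S) * Real.sqrt (h^2*Gx) := by
    have := mul_le_mul_of_nonneg_left hXsum hh.le
    refine this.trans (le_of_eq ?_)
    rw [mul_add]
    congr 1
    · field_simp
    · rw [← hsqrtS]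
      ring
  have f2 : h * ∑ i : ZMod m, Y i ≤ h^2 * S / ((n:ℝ)*h)
      + 2 * Real.sqrt (h^2*S) * Real.sqrt (h^2*Gy) := by
    have := mul_le_mul_of_nonneg_left hYsum hh.le
    refine this.trans (le_of_eq ?_)
    rw [mul_add]
    congr 1
    · field_simp
    · rw [← hsqrtS]
      ring
  exact mul_le_mul f1 f2 (by positivity) (by positivity)

lemma ibp_x (h : ℝ) (hh : h ≠ 0) (F G : Grid m n) :
    ∑ p : ZMod m × ZMod n, ((F p - F (p.1 - 1, p.2))/h) * G p
      = -∑ p : ZMod m × ZMod n, F p * Dx h G p := by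
  have hs : ∑ p : ZMod m × ZMod n, F (p.1-1,p.2) * G p
      = ∑ p : ZMod m × ZMod n, F p * G (p.1+1,p.2) := by
    have := sum_shift2 (m:=m) (n:=n) 1 0 (fun q => F (q.1-1,q.2) * G q)
    simp only [add_sub_cancel_right, add_zero] at this
    exact this.symm
  have lhs : ∑ p : ZMod m × ZMod n, ((F p - F (p.1 - 1, p.2))/h) * G p
      = (∑ p : ZMod m × ZMod n, F p * G p - ∑ p : ZMod m × ZMod n, F (p.1-1,p.2) * G p)/h := by
    rw [← Finset.sum_sub_distrib, Finset.sum_div]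
    exact Finset.sum_congr rfl (fun p _ => by ring)
  have rhs : -∑ p : ZMod m × ZMod n, F p * Dx h G p
      = (∑ p : ZMod m × ZMod n, F p * G p - ∑ p : ZMod m × ZMod n, F p * G (p.1+1,p.2))/h := by
    have pt : ∀ p : ZMod m × ZMod n, F p * Dx h G p = (F p * G (p.1+1,p.2) - F p * G p)/h :=
      fun p => by simp only [Dx]; ring
    rw [Finset.sum_congr rfl (fun p _ => pt p), ← Finset.sum_div, Finset.sum_sub_distrib]
    ring
  rw [lhs, hs, rhs]

lemma ibp_y (h : ℝ) (hh : h ≠ 0) (F G : Grid m n) :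
    ∑ p : ZMod m × ZMod n, ((F p - F (p.1, p.2 - 1))/h) * G p
      = -∑ p : ZMod m × ZMod n, F p * Dy h G p := by
  have hs : ∑ p : ZMod m × ZMod n, F (p.1,p.2-1) * G p
      = ∑ p : ZMod m × ZMod n, F p * G (p.1,p.2+1) := by
    have := sum_shift2 (m:=m) (n:=n) 0 1 (fun q => F (q.1,q.2-1) * G q)
    simp only [add_sub_cancel_right, add_zero] at this
    exact this.symm
  have lhs : ∑ p : ZMod m × ZMod n, ((F p - F (p.1, p.2-1))/h) * G p
      = (∑ p : ZMod m × ZMod n, F p * G p - ∑ p : ZMod m × ZMod n, F (p.1,p.2-1) * G p)/h := by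
    rw [← Finset.sum_sub_distrib, Finset.sum_div]
    exact Finset.sum_congr rfl (fun p _ => by ring)
  have rhs : -∑ p : ZMod m × ZMod n, F p * Dy h G p
      = (∑ p : ZMod m × ZMod n, F p * G p - ∑ p : ZMod m × ZMod n, F p * G (p.1,p.2+1))/h := by
    have pt : ∀ p : ZMod m × ZMod n, F p * Dy h G p = (F p * G (p.1,p.2+1) - F p * G p)/h :=
      fun p => by simp only [Dy]; ring
    rw [Finset.sum_congr rfl (fun p _ => pt p), ← Finset.sum_div, Finset.sum_sub_distrib]
    ring
  rw [lhs, hs, rhs]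

lemma lap_identity (h : ℝ) (hh : 0 < h) (φ : Grid m n) :
    gradNorm2 h (Dx h φ) ^2 + gradNorm2 h (Dy h φ) ^2 = norm2 h (lapH h φ) ^2 := by
  have hne : h ≠ 0 := ne_of_gt hh
  set d2x : Grid m n := fun p => (φ (p.1+1,p.2) - 2*φ p + φ (p.1-1,p.2))/h^2 with hd2x
  set d2y : Grid m n := fun p => (φ (p.1,p.2+1) - 2*φ p + φ (p.1,p.2-1))/h^2 with hd2y
  set c : Grid m n := Dy h (Dx h φ) with hc
  -- squares of norms
  have g1 : gradNorm2 h (Dx h φ) ^2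
      = h^2 * ∑ p : ZMod m × ZMod n, (Dx h (Dx h φ) p ^2 + Dy h (Dx h φ) p ^2) :=
    Real.sq_sqrt (by positivity)
  have g2 : gradNorm2 h (Dy h φ) ^2
      = h^2 * ∑ p : ZMod m × ZMod n, (Dx h (Dy h φ) p ^2 + Dy h (Dy h φ) p ^2) :=
    Real.sq_sqrt (by positivity)
  have g3 : norm2 h (lapH h φ) ^2 = h^2 * ∑ p : ZMod m × ZMod n, lapH h φ p ^2 :=
    Real.sq_sqrt (by positivity)
  rw [g1, g2, g3, ← mul_add]
  congr 1
  -- pointwise identifications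
  have hxx : ∑ p : ZMod m × ZMod n, Dx h (Dx h φ) p ^2 = ∑ p : ZMod m × ZMod n, d2x p ^2 := by
    have pt : ∀ p : ZMod m × ZMod n, Dx h (Dx h φ) p = d2x (p.1+1,p.2) := by
      intro p
      simp only [Dx, hd2x, add_sub_cancel_right]
      field_simp
      ring
    rw [Finset.sum_congr rfl (fun p _ => by rw [pt p])]
    have := sum_shift2 (m:=m) (n:=n) 1 0 (fun q => d2x q ^2)
    simpa using this
  have hyy : ∑ p : ZMod m × ZMod n, Dy h (Dy h φ) p ^2 = ∑ p : ZMod m × ZMod n, d2y p ^2 := by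
    have pt : ∀ p : ZMod m × ZMod n, Dy h (Dy h φ) p = d2y (p.1,p.2+1) := by
      intro p
      simp only [Dy, hd2y, add_sub_cancel_right]
      field_simp
      ring
    rw [Finset.sum_congr rfl (fun p _ => by rw [pt p])]
    have := sum_shift2 (m:=m) (n:=n) 0 1 (fun q => d2y q ^2)
    simpa using this
  have hxy : Dx h (Dy h φ) = c := by
    funext p
    simp only [Dx, Dy, hc]
    ring
  have hlap : ∀ p : ZMod m × ZMod n, lapH h φ p = d2x p + d2y p := by
    intro p
    simp only [lapH, hd2x, hd2y]
    ring
  -- cross term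
  have hx1 : ∀ p : ZMod m × ZMod n, d2x p = (Dx h φ p - Dx h φ (p.1 - 1, p.2))/h := by
    intro p
    simp only [Dx, hd2x, sub_add_cancel]
    field_simp
    ring
  have hdxd2y : ∀ p : ZMod m × ZMod n, Dx h d2y p = (c p - c (p.1, p.2-1))/h := by
    intro p
    simp only [Dx, Dy, hc, hd2y, sub_add_cancel]
    field_simp
    ring
  have cross : ∑ p : ZMod m × ZMod n, d2x p * d2y p = ∑ p : ZMod m × ZMod n, c p ^2 := by
    calc ∑ p : ZMod m × ZMod n, d2x p * d2y p
        = ∑ p : ZMod m × ZMod n, ((Dx h φ p - Dx h φ (p.1-1,p.2))/h) * d2y p :=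
          Finset.sum_congr rfl (fun p _ => by rw [hx1 p])
      _ = -∑ p : ZMod m × ZMod n, Dx h φ p * Dx h d2y p := ibp_x h hne _ _
      _ = -∑ p : ZMod m × ZMod n, ((c p - c (p.1,p.2-1))/h) * Dx h φ p := by
          rw [neg_inj]
          exact Finset.sum_congr rfl (fun p _ => by rw [hdxd2y p]; ring)
      _ = ∑ p : ZMod m × ZMod n, c p * Dy h (Dx h φ) p := by
          rw [ibp_y h hne c (Dx h φ), neg_neg]
      _ = ∑ p : ZMod m × ZMod n, c p ^2 := by
          exact Finset.sum_congr rfl (fun p _ => by rw [← hc]; ring)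
  -- assemble
  have expand : ∑ p : ZMod m × ZMod n, lapH h φ p ^2
      = ∑ p : ZMod m × ZMod n, d2x p ^2 + 2 * ∑ p : ZMod m × ZMod n, d2x p * d2y p
        + ∑ p : ZMod m × ZMod n, d2y p ^2 := by
    rw [Finset.sum_congr rfl (fun p _ => by rw [hlap p])]
    simp only [add_sq, Finset.sum_add_distrib, Finset.mul_sum]
    congr 1
    congr 1
    exact Finset.sum_congr rfl (fun p _ => by ring)
  rw [expand, cross, Finset.sum_add_distrib, Finset.sum_add_distrib, hxx, hyy, hxy, ← hc]
  ring

/-- the constant -/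
def Kconst (Lx Ly : ℝ) : ℝ :=
  2*(Lx^2+Ly^2) / min Lx Ly + 2 * Real.sqrt (2*(Lx^2+Ly^2))

lemma Kconst_pos {Lx Ly : ℝ} (hLx : 0 < Lx) (hLy : 0 < Ly) : 0 < Kconst Lx Ly := by
  have h1 : 0 < min Lx Ly := lt_min hLx hLy
  have : 0 < 2*(Lx^2+Ly^2) := by positivity
  have : 0 < 2*(Lx^2+Ly^2) / min Lx Ly := by positivity
  have h2 : 0 ≤ Real.sqrt (2*(Lx^2+Ly^2)) := Real.sqrt_nonneg _
  unfold Kconst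
  linarith


lemma main_est (Lx Ly h : ℝ) (hLx : 0 < Lx) (hLy : 0 < Ly) (hh : 0 < h)
    (hmx : (m:ℝ)*h = Lx) (hny : (n:ℝ)*h = Ly) (u : Grid m n)
    (hmean : ∑ p : ZMod m × ZMod n, u p = 0) :
    norm4 h u ≤ Real.sqrt (Kconst Lx Ly) * gradNorm2 h u := by
  set S := ∑ p : ZMod m × ZMod n, u p ^2 with hS
  set Gx := ∑ p : ZMod m × ZMod n, Dx h u p ^2 with hGx
  set Gy := ∑ p : ZMod m × ZMod n, Dy h u p ^2 with hGy
  have hSnn : 0 ≤ S := Finset.sum_nonneg (fun p _ => sq_nonneg _)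
  have hGxnn : 0 ≤ Gx := Finset.sum_nonneg (fun p _ => sq_nonneg _)
  have hGynn : 0 ≤ Gy := Finset.sum_nonneg (fun p _ => sq_nonneg _)
  set G := gradNorm2 h u with hG
  have hGnn : 0 ≤ G := Real.sqrt_nonneg _
  have hG2 : G^2 = h^2*Gx + h^2*Gy := by
    rw [hG, gradNorm2, Real.sq_sqrt (by positivity)]
    rw [Finset.sum_add_distrib, mul_add]
  set CP := Real.sqrt (2*(Lx^2+Ly^2)) with hCP
  have hCPnn : 0 ≤ CP := Real.sqrt_nonneg _
  have hCP2 : CP^2 = 2*(Lx^2+Ly^2) := Real.sq_sqrt (by positivity)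
  -- Poincaré
  have hpo : h^2*S ≤ CP^2 * G^2 := by
    have := poincare h hh u hmean
    rw [hmx, hny] at this
    rw [hCP2, hG2]
    nlinarith [this, sq_nonneg Lx, sq_nonneg Ly, mul_nonneg (sq_nonneg h) hGxnn,
      mul_nonneg (sq_nonneg h) hGynn, sq_nonneg (Lx*h), sq_nonneg (Ly*h)]
  have hN : Real.sqrt (h^2*S) ≤ CP * G := by
    calc Real.sqrt (h^2*S) ≤ Real.sqrt ((CP*G)^2) := Real.sqrt_le_sqrt (by nlinarith [hpo])
      _ = CP*G := Real.sqrt_sq (by positivity)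
  have hGxle : Real.sqrt (h^2*Gx) ≤ G := by
    calc Real.sqrt (h^2*Gx) ≤ Real.sqrt (G^2) := by
          apply Real.sqrt_le_sqrt
          rw [hG2]
          nlinarith [mul_nonneg (sq_nonneg h) hGynn]
      _ = G := Real.sqrt_sq hGnn
  have hGyle : Real.sqrt (h^2*Gy) ≤ G := by
    calc Real.sqrt (h^2*Gy) ≤ Real.sqrt (G^2) := by
          apply Real.sqrt_le_sqrt
          rw [hG2]
          nlinarith [mul_nonneg (sq_nonneg h) hGxnn]
      _ = G := Real.sqrt_sq hGnn
  have hmin : 0 < min Lx Ly := lt_min hLx hLy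
  set K := Kconst Lx Ly with hK
  have hKnn : 0 < K := Kconst_pos hLx hLy
  -- factor bounds
  have f1 : h^2*S/Lx + 2*Real.sqrt (h^2*S)*Real.sqrt (h^2*Gx) ≤ K * G^2 := by
    have a1 : h^2*S/Lx ≤ CP^2*G^2 / min Lx Ly := by
      apply div_le_div₀ (by positivity) hpo hmin (min_le_left _ _)
    have a2 : 2*Real.sqrt (h^2*S)*Real.sqrt (h^2*Gx) ≤ 2*(CP*G)*G := by
      have := mul_le_mul hN hGxle (Real.sqrt_nonneg _) (by positivity)
      nlinarith [this]
    have : CP^2*G^2/min Lx Ly + 2*(CP*G)*G = K * G^2 := by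
      rw [hK]
      unfold Kconst
      rw [← hCP2]
      field_simp
      rw [Real.sqrt_sq hCPnn]
      ring
    linarith
  have f2 : h^2*S/Ly + 2*Real.sqrt (h^2*S)*Real.sqrt (h^2*Gy) ≤ K * G^2 := by
    have a1 : h^2*S/Ly ≤ CP^2*G^2 / min Lx Ly := by
      apply div_le_div₀ (by positivity) hpo hmin (min_le_right _ _)
    have a2 : 2*Real.sqrt (h^2*S)*Real.sqrt (h^2*Gy) ≤ 2*(CP*G)*G := by
      have := mul_le_mul hN hGyle (Real.sqrt_nonneg _) (by positivity)
      nlinarith [this]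
    have : CP^2*G^2/min Lx Ly + 2*(CP*G)*G = K * G^2 := by
      rw [hK]
      unfold Kconst
      rw [← hCP2]
      field_simp
      rw [Real.sqrt_sq hCPnn]
      ring
    linarith
  -- combine with lady
  have hl := lady h hh u
  rw [hmx, hny] at hl
  have hfour : h^2 * ∑ p : ZMod m × ZMod n, u p ^4 ≤ (Real.sqrt K * G)^4 := by
    have prod_le : (h^2*S/Lx + 2*Real.sqrt (h^2*S)*Real.sqrt (h^2*Gx))
        * (h^2*S/Ly + 2*Real.sqrt (h^2*S)*Real.sqrt (h^2*Gy)) ≤ (K*G^2)*(K*G^2) := by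
      apply mul_le_mul f1 f2 (by positivity) (by positivity)
    have : (K*G^2)*(K*G^2) = (Real.sqrt K * G)^4 := by
      have h4 : (Real.sqrt K)^4 = K^2 := by
        rw [show (Real.sqrt K)^4 = ((Real.sqrt K)^2)^2 from by ring, Real.sq_sqrt hKnn.le]
      rw [mul_pow, h4]
      ring
    linarith [hl, prod_le, this.le, this.ge]
  -- take fourth roots
  have base_nn : 0 ≤ h^2 * ∑ p : ZMod m × ZMod n, u p ^4 := by positivity
  have rhs_nn : 0 ≤ Real.sqrt K * G := by positivity
  rw [norm4]
  calc (h^2 * ∑ p : ZMod m × ZMod n, u p ^4) ^ ((1:ℝ)/4)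
      ≤ ((Real.sqrt K * G)^4) ^ ((1:ℝ)/4) := by
        apply Real.rpow_le_rpow base_nn hfour (by norm_num)
    _ = Real.sqrt K * G := by
        rw [← Real.rpow_natCast (Real.sqrt K * G) 4, ← Real.rpow_mul rhs_nn]
        norm_num

lemma quartic_root_pow (x : ℝ) (hx : 0 ≤ x) : (x ^ ((1:ℝ)/4))^(4:ℕ) = x := by
  rw [← Real.rpow_natCast (x ^ ((1:ℝ)/4)) 4, ← Real.rpow_mul hx]
  norm_num

lemma fourthroot_le {E C : ℝ} (hE : 0 ≤ E) (hC : 0 ≤ C) (hle : E ≤ C^4) :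
    E ^ ((1:ℝ)/4) ≤ C := by
  calc E ^ ((1:ℝ)/4) ≤ (C^4) ^ ((1:ℝ)/4) := Real.rpow_le_rpow hE hle (by norm_num)
    _ = C := by
      rw [← Real.rpow_natCast C 4, ← Real.rpow_mul hC]
      norm_num

end Helpers

/-- There is a constant `C₄ > 0` depending only on `Lx` and `Ly` (not on `h`, `m`, `n`)
such that for every periodic grid function `φ`: `‖φ − φ̄‖₄ ≤ C₄ ‖∇ₕφ‖₂` and
`‖∇ₕφ‖₄ ≤ C₄ ‖Δₕφ‖₂`. -/
theorem discrete_poincare_L4 (Lx Ly : ℝ) (hLx : 0 < Lx) (hLy : 0 < Ly) :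
    ∃ C₄ > (0 : ℝ), ∀ (m n : ℕ) [NeZero m] [NeZero n] (h : ℝ), 0 < h →
      (m : ℝ) * h = Lx → (n : ℝ) * h = Ly →
      ∀ φ : Grid m n,
        norm4 h (fun p => φ p - (∑ q : ZMod m × ZMod n, φ q) / ((m : ℝ) * (n : ℝ)))
          ≤ C₄ * gradNorm2 h φ ∧
        gradNorm4 h φ ≤ C₄ * norm2 h (lapH h φ) := by
  refine ⟨Real.sqrt (Kconst Lx Ly), Real.sqrt_pos.mpr (Kconst_pos hLx hLy), ?_⟩
  intro m n _ _ h hh hmx hny φ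
  have hm : (0:ℝ) < m := by exact_mod_cast Nat.pos_of_ne_zero (NeZero.ne m)
  have hn : (0:ℝ) < n := by exact_mod_cast Nat.pos_of_ne_zero (NeZero.ne n)
  constructor
  · -- part (i)
    set cc := (∑ q : ZMod m × ZMod n, φ q) / ((m:ℝ)*(n:ℝ)) with hcc
    set u : Grid m n := fun p => φ p - cc with hu
    have hmean : ∑ p : ZMod m × ZMod n, u p = 0 := by
      rw [hu]
      rw [Finset.sum_sub_distrib, Finset.sum_const, Finset.card_univ, Fintype.card_prod,
        ZMod.card, ZMod.card, nsmul_eq_mul, hcc]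
      push_cast
      field_simp
      ring
    have hDx : Dx h u = Dx h φ := by
      funext p
      simp only [Dx, hu]
      ring
    have hDy : Dy h u = Dy h φ := by
      funext p
      simp only [Dy, hu]
      ring
    have := main_est Lx Ly h hLx hLy hh hmx hny u hmean
    rwa [show gradNorm2 h u = gradNorm2 h φ from by rw [gradNorm2, gradNorm2, hDx, hDy]] at this
  · -- part (ii)
    have hu := main_est Lx Ly h hLx hLy hh hmx hny (Dx h φ) (sum_dx_zero h φ)
    have hv := main_est Lx Ly h hLx hLy hh hmx hny (Dy h φ) (sum_dy_zero h φ)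
    set K := Kconst Lx Ly with hKdef
    have hKpos : 0 < K := Kconst_pos hLx hLy
    set N := norm2 h (lapH h φ) with hN
    have hNnn : 0 ≤ N := Real.sqrt_nonneg _
    have hid := lap_identity h hh φ
    set G1 := gradNorm2 h (Dx h φ) with hG1
    set G2 := gradNorm2 h (Dy h φ) with hG2
    have hG1nn : 0 ≤ G1 := Real.sqrt_nonneg _
    have hG2nn : 0 ≤ G2 := Real.sqrt_nonneg _
    set Ex := h^2 * ∑ p : ZMod m × ZMod n, Dx h φ p ^4 with hEx
    set Ey := h^2 * ∑ p : ZMod m × ZMod n, Dy h φ p ^4 with hEy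
    have hExnn : 0 ≤ Ex := by rw [hEx]; positivity
    have hEynn : 0 ≤ Ey := by rw [hEy]; positivity
    have hu4 : Ex ≤ (Real.sqrt K * G1)^4 := by
      have : Ex = (norm4 h (Dx h φ))^(4:ℕ) := by
        rw [norm4, quartic_root_pow _ (by positivity)]
      rw [this]
      exact pow_le_pow_left₀ (by rw [norm4]; positivity) hu 4
    have hv4 : Ey ≤ (Real.sqrt K * G2)^4 := by
      have : Ey = (norm4 h (Dy h φ))^(4:ℕ) := by
        rw [norm4, quartic_root_pow _ (by positivity)]
      rw [this]
      exact pow_le_pow_left₀ (by rw [norm4]; positivity) hv 4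
    have hsK4 : (Real.sqrt K)^4 = K^2 := by
      rw [show (Real.sqrt K)^4 = ((Real.sqrt K)^2)^2 from by ring, Real.sq_sqrt hKpos.le]
    have key : Ex + Ey ≤ (Real.sqrt K * N)^4 := by
      have b1 : (Real.sqrt K * G1)^4 + (Real.sqrt K * G2)^4 = K^2 * (G1^4 + G2^4) := by
        rw [mul_pow, mul_pow, hsK4]
        ring
      have b2 : G1^4 + G2^4 ≤ (G1^2 + G2^2)^2 := by nlinarith [sq_nonneg G1, sq_nonneg G2]
      have b3 : (G1^2 + G2^2)^2 = N^4 := by rw [hid]; ring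
      have b4 : (Real.sqrt K * N)^4 = K^2 * N^4 := by rw [mul_pow, hsK4]
      nlinarith [hu4, hv4, sq_nonneg K]
    have hgn4 : gradNorm4 h φ
        = (Ex + Ey) ^ ((1:ℝ)/4) := by
      rw [gradNorm4, hEx, hEy]
      congr 1
      rw [Finset.sum_add_distrib, mul_add]
    rw [hgn4]
    exact fourthroot_le (by positivity) (by positivity) key
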